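/- Identifiability for blocks of size d = 2: let (α_1, α_2, ε_1, ε_2, δ_1, δ_2) and (α'_1, α'_2, ε'_1, ε'_2, δ'_1, δ'_2) be two parameter vectors of the one-factor binary model with two variables, with all α's in (0,1), all ε's in (0,1), each ordered so that β_1 ≤ β_2 and β'_1 ≤ β'_2, and satisfying the constraints δ_1 = δ'_1 = 1, ε_1 = ε_2 and ε'_1 = ε'_2. If the two parameter vectors induce the same joint pmf on {0,1}², then α_1 = α'_1, α_2 = α'_2, ε_1 = ε'_1, ε_2 = ε'_2 and δ_2 = δ'_2. -/

import Mathlib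

open MeasureTheory Set

lemma step_integrable (a b P Q R : ℝ) (c d : ℝ) :
    IntervalIntegrable (fun u => if u < a then P else if u < b then Q else R)
      volume c d := by
  have hm : Measurable (fun u : ℝ => if u < a then P else if u < b then Q else R) := by
    refine Measurable.ite measurableSet_Iio measurable_const ?_
    exact Measurable.ite measurableSet_Iio measurable_const measurable_const
  constructor <;>
  · refine Measure.integrableOn_of_bounded (M := max ‖P‖ (max ‖Q‖ ‖R‖)) measure_Ioc_lt_top.ne
      hm.aestronglyMeasurable (MeasureTheory.ae_of_all _ fun x => ?_)
    · split_ifs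
      · exact le_max_left _ _
      · exact le_trans (le_max_left _ _) (le_max_right _ _)
      · exact le_trans (le_max_right _ _) (le_max_right _ _)

lemma ae_ne' (a : ℝ) : ∀ᵐ x : ℝ, x ≠ a := by
  rw [MeasureTheory.ae_iff]
  simp only [not_not]
  simpa using measure_singleton a

lemma step2 (a b P Q R : ℝ) (h0 : 0 ≤ a) (hab : a ≤ b) (hb1 : b ≤ 1) :
    (∫ u in (0:ℝ)..1, (if u < a then P else if u < b then Q else R))
      = a * P + (b - a) * Q + (1 - b) * R := by
  have h1 : (∫ u in (0:ℝ)..a, (if u < a then P else if u < b then Q else R)) = a * P := by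
    rw [intervalIntegral.integral_congr_ae (g := fun _ => P) ?_,
      intervalIntegral.integral_const, smul_eq_mul]
    · ring
    · filter_upwards [ae_ne' a] with x hx hmem
      rw [uIoc_of_le h0] at hmem
      rw [if_pos (lt_of_le_of_ne hmem.2 hx)]
  have h2 : (∫ u in a..b, (if u < a then P else if u < b then Q else R)) = (b - a) * Q := by
    rw [intervalIntegral.integral_congr_ae (g := fun _ => Q) ?_,
      intervalIntegral.integral_const, smul_eq_mul]
    · filter_upwards [ae_ne' b] with x hx hmem
      rw [uIoc_of_le hab] at hmem
      rw [if_neg (not_lt.2 hmem.1.le), if_pos (lt_of_le_of_ne hmem.2 hx)]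
  have h3 : (∫ u in b..(1:ℝ), (if u < a then P else if u < b then Q else R)) = (1 - b) * R := by
    rw [intervalIntegral.integral_congr_ae (g := fun _ => R) ?_,
      intervalIntegral.integral_const, smul_eq_mul]
    · filter_upwards with x hmem
      rw [uIoc_of_le hb1] at hmem
      rw [if_neg (not_lt.2 (le_trans hab hmem.1.le)), if_neg (not_lt.2 hmem.1.le)]
  rw [← intervalIntegral.integral_add_adjacent_intervals (step_integrable a b P Q R 0 a)
      (step_integrable a b P Q R a 1), ← intervalIntegral.integral_add_adjacent_intervals
      (step_integrable a b P Q R a b) (step_integrable a b P Q R b 1), h1, h2, h3]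
  ring

lemma prodstep (a b A B C D : ℝ) (h0 : 0 ≤ a) (hab : a ≤ b) (hb1 : b ≤ 1) :
    (∫ u in (0:ℝ)..1, (if u < a then A else B) * (if u < b then C else D))
      = a * (A * C) + (b - a) * (B * C) + (1 - b) * (B * D) := by
  rw [← step2 a b (A*C) (B*C) (B*D) h0 hab hb1]
  apply intervalIntegral.integral_congr
  intro x _
  dsimp only
  split_ifs with h1 h2 h2
  · rfl
  · exact absurd (lt_of_lt_of_le h1 hab) h2
  · rfl
  · rfl

lemma sq_inj' (x y : ℝ) (hx : 0 < x) (hy : 0 < y) (h : x^2 = y^2) : x = y := by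
  nlinarith

set_option maxHeartbeats 1000000 in
/-- **Identifiability for blocks of size `d = 2` (Proposition 2, case 2).**
Two parameter vectors `(α₁,α₂,ε₁,ε₂,δ₁,δ₂)` and `(α₁',α₂',ε₁',ε₂',δ₁',δ₂')` of the
two-variable one-factor binary model, with `α, ε ∈ (0,1)`, `δ ∈ {0,1}`, ordered so
that `β₁ ≤ β₂` and `β₁' ≤ β₂'`, and satisfying the identifiability constraints
`δ₁ = δ₁' = 1`, `ε₁ = ε₂` and `ε₁' = ε₂'`.  If they induce the same joint pmf on
`{0,1}²`, then the parameters coincide. -/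
theorem identifiability_d_eq_two
    (α1 α2 ε1 ε2 δ1 δ2 β1 β2 lam1 lam2 ν1 ν2 : ℝ)
    (α1' α2' ε1' ε2' δ1' δ2' β1' β2' lam1' lam2' ν1' ν2' : ℝ)
    (hα1 : α1 ∈ Set.Ioo (0:ℝ) 1) (hα2 : α2 ∈ Set.Ioo (0:ℝ) 1)
    (hε1 : ε1 ∈ Set.Ioo (0:ℝ) 1) (hε2 : ε2 ∈ Set.Ioo (0:ℝ) 1)
    (hδ2 : δ2 = 0 ∨ δ2 = 1)
    (hα1' : α1' ∈ Set.Ioo (0:ℝ) 1) (hα2' : α2' ∈ Set.Ioo (0:ℝ) 1)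
    (hε1' : ε1' ∈ Set.Ioo (0:ℝ) 1) (hε2' : ε2' ∈ Set.Ioo (0:ℝ) 1)
    (hδ2' : δ2' = 0 ∨ δ2' = 1)
    (hβ1 : β1 = if δ1 = 1 then α1 else 1 - α1)
    (hβ2 : β2 = if δ2 = 1 then α2 else 1 - α2)
    (hβ1' : β1' = if δ1' = 1 then α1' else 1 - α1')
    (hβ2' : β2' = if δ2' = 1 then α2' else 1 - α2')
    (hlam1 : lam1 = (1 - ε1) * α1 + ε1 * δ1) (hν1 : ν1 = (1 - ε1) * α1 + ε1 * (1 - δ1))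
    (hlam2 : lam2 = (1 - ε2) * α2 + ε2 * δ2) (hν2 : ν2 = (1 - ε2) * α2 + ε2 * (1 - δ2))
    (hlam1' : lam1' = (1 - ε1') * α1' + ε1' * δ1')
    (hν1' : ν1' = (1 - ε1') * α1' + ε1' * (1 - δ1'))
    (hlam2' : lam2' = (1 - ε2') * α2' + ε2' * δ2')
    (hν2' : ν2' = (1 - ε2') * α2' + ε2' * (1 - δ2'))
    (hord : β1 ≤ β2) (hord' : β1' ≤ β2')
    (hδ1 : δ1 = 1) (hδ1' : δ1' = 1)
    (hconstr : ε1 = ε2) (hconstr' : ε1' = ε2')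
    (heq : ∀ x1 x2 : ℕ, x1 ≤ 1 → x2 ≤ 1 →
      (∫ u in (0:ℝ)..1,
        ((if u < β1 then lam1 else ν1) ^ x1 *
          (1 - (if u < β1 then lam1 else ν1)) ^ (1 - x1)) *
        ((if u < β2 then lam2 else ν2) ^ x2 *
          (1 - (if u < β2 then lam2 else ν2)) ^ (1 - x2)))
      = (∫ u in (0:ℝ)..1,
        ((if u < β1' then lam1' else ν1') ^ x1 *
          (1 - (if u < β1' then lam1' else ν1')) ^ (1 - x1)) *
        ((if u < β2' then lam2' else ν2') ^ x2 *
          (1 - (if u < β2' then lam2' else ν2')) ^ (1 - x2)))) :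
    α1 = α1' ∧ α2 = α2' ∧ ε1 = ε1' ∧ ε2 = ε2' ∧ δ2 = δ2' := by
  subst hδ1 hδ1' hconstr hconstr'
  norm_num at hβ1 hβ1' hlam1 hν1 hlam1' hν1'
  have hsub : ∀ (x b P Q : ℝ), (1 - if x < b then P else Q) = if x < b then 1-P else 1-Q := by
    intro x b P Q; split_ifs <;> ring
  have E11 := heq 1 1 le_rfl le_rfl
  have E10 := heq 1 0 le_rfl (by norm_num)
  have E01 := heq 0 1 (by norm_num) le_rfl
  simp only [pow_one, pow_zero, Nat.sub_self, Nat.sub_zero, one_mul, mul_one, hsub]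
    at E11 E10 E01
  obtain ⟨ha10, ha11⟩ := hα1
  obtain ⟨ha20, ha21⟩ := hα2
  obtain ⟨ha10', ha11'⟩ := hα1'
  obtain ⟨ha20', ha21'⟩ := hα2'
  obtain ⟨he0, he1⟩ := hε1
  obtain ⟨he0', he1'⟩ := hε1'
  rcases hδ2 with h2 | h2 <;> rcases hδ2' with h2' | h2' <;> subst h2 h2' <;>
    norm_num at hβ2 hβ2' hlam2 hν2 hlam2' hν2' <;>
    rw [hβ1, hβ2] at hord <;> rw [hβ1', hβ2'] at hord' <;>
    rw [hβ1, hβ2, hβ1', hβ2', hlam1, hν1, hlam2, hν2, hlam1', hν1', hlam2', hν2']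
      at E11 E10 E01 <;>
    rw [prodstep _ _ _ _ _ _ ha10.le hord (by linarith),
        prodstep _ _ _ _ _ _ ha10'.le hord' (by linarith)] at E11 E10 E01
  -- case δ2 = 0, δ2' = 0
  · have hA1 : α1 = α1' := by linear_combination E11 + E10
    have hA2 : α2 = α2' := by linear_combination E11 + E01
    rw [← hA1, ← hA2] at E11
    have hsq : ε1^2 = ε1'^2 := by
      have hc : α1 * α2 ≠ 0 := ne_of_gt (mul_pos ha10 ha20)
      apply mul_right_cancel₀ hc
      linear_combination -E11
    exact ⟨hA1, hA2, sq_inj' _ _ he0 he0' hsq, sq_inj' _ _ he0 he0' hsq, rfl⟩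
  -- case δ2 = 0, δ2' = 1
  · exfalso
    have hA1 : α1 = α1' := by linear_combination E11 + E10
    have hA2 : α2 = α2' := by linear_combination E11 + E01
    rw [← hA1, ← hA2] at E11
    have key : ε1^2 * (α1 * α2) + ε1'^2 * (α1 * (1 - α2)) = 0 := by
      linear_combination -E11
    have p1 : 0 < ε1^2 * (α1 * α2) := by positivity
    have p2 : 0 < ε1'^2 * (α1 * (1 - α2)) := by
      have : 0 < 1 - α2 := by linarith
      positivity
    linarith
  -- case δ2 = 1, δ2' = 0
  · exfalso
    have hA1 : α1 = α1' := by linear_combination E11 + E10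
    have hA2 : α2 = α2' := by linear_combination E11 + E01
    rw [← hA1, ← hA2] at E11
    have key : ε1^2 * (α1 * (1 - α2)) + ε1'^2 * (α1 * α2) = 0 := by
      linear_combination E11
    have p1 : 0 < ε1^2 * (α1 * (1 - α2)) := by
      have : 0 < 1 - α2 := by linarith
      positivity
    have p2 : 0 < ε1'^2 * (α1 * α2) := by positivity
    linarith
  -- case δ2 = 1, δ2' = 1
  · have hA1 : α1 = α1' := by linear_combination E11 + E10
    have hA2 : α2 = α2' := by linear_combination E11 + E01
    rw [← hA1, ← hA2] at E11
    have hsq : ε1^2 = ε1'^2 := by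
      have hc : α1 * (1 - α2) ≠ 0 := ne_of_gt (mul_pos ha10 (sub_pos.2 ha21))
      apply mul_right_cancel₀ hc
      linear_combination E11
    exact ⟨hA1, hA2, sq_inj' _ _ he0 he0' hsq, sq_inj' _ _ he0 he0' hsq, rfl⟩
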